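/- Branching-process extinction tail bound (proved inside Lemma 2 of the paper): let Δ ≥ 1 be an integer and let Y_1, Y_2, … be independent random variables, each binomially distributed with Δ trials and success probability 1/(2Δ). Define A_0 = 1 and A_k = A_{k−1} − 1 + Y_k for k ≥ 1, and let C' = min{k ≥ 0 : A_k = 0}. Then for every integer k ≥ 1, the probability that C' > k is at most e^{−k/6}. -/

import Mathlib

open MeasureTheory

/-- Branching-process extinction tail bound: let `Δ ≥ 1` and let `Y_1, Y_2, …` be
independent random variables, each binomially distributed with `Δ` trials and success
probability `1/(2Δ)` (here `Y i` plays the role of `Y_{i+1}`). With `A_0 = 1` and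
`A_k = A_{k-1} - 1 + Y_k`, i.e. `A_m = 1 - m + ∑_{i<m} Y i`, and
`C' = min {k ≥ 0 : A_k = 0}`, for every integer `k ≥ 1` the probability that `C' > k`
(equivalently, that `A_m ≠ 0` for all `m ≤ k`) is at most `e^{-k/6}`. -/
theorem branching_process_tail {Ω : Type*} [MeasurableSpace Ω] (μ : Measure Ω)
    [IsProbabilityMeasure μ] (Δ : ℕ) (hΔ : 1 ≤ Δ)
    (Y : ℕ → Ω → ℕ) (hmeas : ∀ i, Measurable (Y i))
    (hindep : ProbabilityTheory.iIndepFun Y μ)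
    (hdist : ∀ i : ℕ, ∀ m : ℕ, μ {ω | Y i ω = m} =
      ENNReal.ofReal ((Δ.choose m : ℝ) * (1 / (2 * (Δ : ℝ))) ^ m *
        (1 - 1 / (2 * (Δ : ℝ))) ^ (Δ - m)))
    (k : ℕ) (hk : 1 ≤ k) :
    μ {ω | ∀ m ≤ k, (1 : ℤ) - (m : ℤ) + ∑ i ∈ Finset.range m, (Y i ω : ℤ) ≠ 0} ≤
      ENNReal.ofReal (Real.exp (-(k : ℝ) / 6)) := by
  set p : ℝ := 1 / (2 * (Δ : ℝ)) with hp
  have hΔpos : (0 : ℝ) < Δ := by exact_mod_cast hΔ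
  have hppos : 0 < p := by positivity
  have hple : p ≤ 1 / 2 := by
    rw [hp]
    rw [div_le_div_iff₀ (by positivity) (by norm_num)]
    have hΔ1 : (1 : ℝ) ≤ Δ := by exact_mod_cast hΔ
    nlinarith
  -- the random variables 2^{Y i} : Ω → ℝ≥0∞
  set Z : ℕ → Ω → ENNReal := fun i ω => (2 : ENNReal) ^ (Y i ω) with hZ
  have hZmeas : ∀ i, Measurable (Z i) := fun i =>
    (measurable_from_nat (f := fun n : ℕ => (2 : ENNReal) ^ n)).comp (hmeas i)
  have hZindep : ProbabilityTheory.iIndepFun Z μ :=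
    hindep.comp (fun _ n => (2 : ENNReal) ^ n) (fun _ => measurable_from_nat)
  -- single moment: ∫ 2^{Y i} = (1 + p)^Δ
  have hmoment : ∀ i, ∫⁻ ω, Z i ω ∂μ = ENNReal.ofReal ((1 + p) ^ Δ) := by
    intro i
    have hmap : ∫⁻ ω, Z i ω ∂μ = ∫⁻ n, (2 : ENNReal) ^ n ∂(μ.map (Y i)) := by
      rw [lintegral_map measurable_from_nat (hmeas i)]
    rw [hmap, lintegral_countable' (μ := μ.map (Y i)) (fun n => (2 : ENNReal) ^ n)]
    have hsingle : ∀ n : ℕ, (μ.map (Y i)) {n} = μ {ω | Y i ω = n} := by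
      intro n
      rw [Measure.map_apply (hmeas i) (measurableSet_singleton n)]
      rfl
    have hterm : ∀ n : ℕ, (2 : ENNReal) ^ n * (μ.map (Y i)) {n} =
        ENNReal.ofReal ((Δ.choose n : ℝ) * (2 * p) ^ n * (1 - p) ^ (Δ - n)) := by
      intro n
      rw [hsingle, hdist i n]
      rw [show (2 : ENNReal) ^ n = ENNReal.ofReal ((2 : ℝ) ^ n) by
        rw [ENNReal.ofReal_pow (by norm_num)]; norm_num]
      rw [← ENNReal.ofReal_mul (by positivity)]
      congr 1
      rw [mul_pow]
      ring
    rw [tsum_congr hterm]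
    have hzero : ∀ n ∉ Finset.range (Δ + 1),
        ENNReal.ofReal ((Δ.choose n : ℝ) * (2 * p) ^ n * (1 - p) ^ (Δ - n)) = 0 := by
      intro n hn
      simp only [Finset.mem_range, not_lt] at hn
      rw [Nat.choose_eq_zero_of_lt (by omega)]
      simp
    rw [tsum_eq_sum hzero]
    rw [← ENNReal.ofReal_sum_of_nonneg (by
      intro n hn
      have h1p : 0 ≤ 1 - p := by linarith
      positivity)]
    congr 1
    have := add_pow (2 * p) (1 - p) Δ
    rw [show 2 * p + (1 - p) = 1 + p by ring] at this
    rw [this]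
    apply Finset.sum_congr rfl
    intro n _
    ring
  -- bound the moment by e^{1/2}
  have hmom_le : ∀ i, ∫⁻ ω, Z i ω ∂μ ≤ ENNReal.ofReal (Real.exp (1 / 2)) := by
    intro i
    rw [hmoment i]
    apply ENNReal.ofReal_le_ofReal
    have h1 : (1 + p) ^ Δ ≤ Real.exp p ^ Δ := by
      apply pow_le_pow_left₀ (by linarith) _ Δ
      have := Real.add_one_le_exp p
      linarith
    have h2 : Real.exp p ^ Δ = Real.exp ((Δ : ℝ) * p) := (Real.exp_nat_mul p Δ).symm
    have h3 : (Δ : ℝ) * p = 1 / 2 := by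
      rw [hp]
      field_simp
    rw [h2, h3] at h1
    exact h1
  -- independence gives the product formula
  have hprod : ∀ n : ℕ, ∫⁻ ω, ∏ i ∈ Finset.range n, Z i ω ∂μ =
      ∏ i ∈ Finset.range n, ∫⁻ ω, Z i ω ∂μ := by
    intro n
    induction n with
    | zero => simp
    | succ n ih =>
      have hindep2 : ProbabilityTheory.IndepFun (∏ j ∈ Finset.range n, Z j) (Z n) μ :=
        hZindep.indepFun_finsetProd_of_notMem hZmeas (by simp)
      have hfmeas : Measurable (∏ j ∈ Finset.range n, Z j) := by
        simp only [Finset.prod_fn]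
        exact Finset.measurable_prod _ (fun j _ => hZmeas j)
      have := ProbabilityTheory.lintegral_mul_eq_lintegral_mul_lintegral_of_indepFun
        hfmeas (hZmeas n) hindep2
      calc ∫⁻ ω, ∏ i ∈ Finset.range (n + 1), Z i ω ∂μ
          = ∫⁻ ω, ((∏ j ∈ Finset.range n, Z j) * Z n) ω ∂μ := by
            apply lintegral_congr
            intro ω
            simp [Finset.prod_range_succ, Finset.prod_apply]
        _ = (∫⁻ ω, (∏ j ∈ Finset.range n, Z j) ω ∂μ) * ∫⁻ ω, Z n ω ∂μ := this
        _ = (∫⁻ ω, ∏ j ∈ Finset.range n, Z j ω ∂μ) * ∫⁻ ω, Z n ω ∂μ := by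
            congr 1
            apply lintegral_congr
            intro ω
            simp [Finset.prod_apply]
        _ = ∏ i ∈ Finset.range (n + 1), ∫⁻ ω, Z i ω ∂μ := by
            rw [ih]
            exact (Finset.prod_range_succ (fun i => ∫⁻ ω, Z i ω ∂μ) n).symm
  -- event inclusion: the event implies ∑_{i<k} Y i ≥ k
  have hincl : {ω | ∀ m ≤ k, (1 : ℤ) - (m : ℤ) + ∑ i ∈ Finset.range m, (Y i ω : ℤ) ≠ 0} ⊆
      {ω | (2 : ENNReal) ^ k ≤ (2 : ENNReal) ^ (∑ i ∈ Finset.range k, Y i ω)} := by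
    intro ω hω
    simp only [Set.mem_setOf_eq] at hω ⊢
    have key : ∀ m ≤ k, (1 : ℤ) ≤ 1 - (m : ℤ) + ∑ i ∈ Finset.range m, (Y i ω : ℤ) := by
      intro m hm
      induction m with
      | zero => simp
      | succ n ih =>
        have hn : n ≤ k := by omega
        have h1 := ih hn
        have h2 := hω (n + 1) hm
        have : (0 : ℤ) ≤ 1 - ((n : ℤ) + 1) + ∑ i ∈ Finset.range (n + 1), (Y i ω : ℤ) := by
          rw [Finset.sum_range_succ]
          have : (0 : ℤ) ≤ (Y n ω : ℤ) := Int.ofNat_nonneg _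
          omega
        push_cast at h2 ⊢
        omega
    have hk' : (k : ℤ) ≤ ∑ i ∈ Finset.range k, (Y i ω : ℤ) := by
      have := key k le_rfl
      omega
    have hkn : k ≤ ∑ i ∈ Finset.range k, Y i ω := by
      have : ((∑ i ∈ Finset.range k, Y i ω : ℕ) : ℤ) = ∑ i ∈ Finset.range k, (Y i ω : ℤ) := by
        push_cast; rfl
      omega
    exact pow_le_pow_right₀ one_le_two hkn
  -- Markov
  have hSmeas : Measurable (fun ω => (2 : ENNReal) ^ (∑ i ∈ Finset.range k, Y i ω)) := by
    apply (measurable_from_nat (f := fun n : ℕ => (2 : ENNReal) ^ n)).comp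
    exact Finset.measurable_sum _ (fun i _ => hmeas i)
  have hmarkov := meas_ge_le_lintegral_div (μ := μ) hSmeas.aemeasurable
    (ε := (2 : ENNReal) ^ k) (by positivity) (by
      apply ENNReal.pow_ne_top
      norm_num)
  have hint : ∫⁻ ω, (2 : ENNReal) ^ (∑ i ∈ Finset.range k, Y i ω) ∂μ ≤
      ENNReal.ofReal (Real.exp (1 / 2)) ^ k := by
    have heq : ∫⁻ ω, (2 : ENNReal) ^ (∑ i ∈ Finset.range k, Y i ω) ∂μ =
        ∏ i ∈ Finset.range k, ∫⁻ ω, Z i ω ∂μ := by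
      rw [← hprod k]
      apply lintegral_congr
      intro ω
      rw [← Finset.prod_pow_eq_pow_sum]
    rw [heq]
    calc ∏ i ∈ Finset.range k, ∫⁻ ω, Z i ω ∂μ
        ≤ ∏ _i ∈ Finset.range k, ENNReal.ofReal (Real.exp (1 / 2)) :=
          Finset.prod_le_prod' (fun i _ => hmom_le i)
      _ = ENNReal.ofReal (Real.exp (1 / 2)) ^ k := by
          rw [Finset.prod_const, Finset.card_range]
  calc μ {ω | ∀ m ≤ k, (1 : ℤ) - (m : ℤ) + ∑ i ∈ Finset.range m, (Y i ω : ℤ) ≠ 0}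
      ≤ μ {ω | (2 : ENNReal) ^ k ≤ (2 : ENNReal) ^ (∑ i ∈ Finset.range k, Y i ω)} :=
        measure_mono hincl
    _ ≤ (∫⁻ ω, (2 : ENNReal) ^ (∑ i ∈ Finset.range k, Y i ω) ∂μ) / (2 : ENNReal) ^ k :=
        hmarkov
    _ ≤ ENNReal.ofReal (Real.exp (1 / 2)) ^ k / (2 : ENNReal) ^ k := by
        exact ENNReal.div_le_div_right hint _
    _ ≤ ENNReal.ofReal (Real.exp (-(k : ℝ) / 6)) := by
        have h2 : (2 : ENNReal) ^ k = ENNReal.ofReal ((2 : ℝ) ^ k) := by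
          rw [ENNReal.ofReal_pow (by norm_num)]; norm_num
        rw [h2, ← ENNReal.ofReal_pow (Real.exp_pos _).le,
          ← ENNReal.ofReal_div_of_pos (by positivity)]
        apply ENNReal.ofReal_le_ofReal
        have hexp : Real.exp (1 / 2) ^ k = Real.exp ((k : ℝ) / 2) := by
          rw [← Real.exp_nat_mul]
          ring_nf
        have h2k : (2 : ℝ) ^ k = Real.exp ((k : ℝ) * Real.log 2) := by
          rw [Real.exp_nat_mul, Real.exp_log (by norm_num)]
        rw [hexp, h2k, ← Real.exp_sub]
        apply Real.exp_le_exp.mpr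
        have hlog := Real.log_two_gt_d9
        have hkpos : (1 : ℝ) ≤ k := by exact_mod_cast hk
        nlinarith
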